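/- Let B be the 6×6 Hermitian matrix [[0,0,0,0,0,α],[0,0,0,0,2α,1],[0,0,2α,0,1,0],[0,0,0,α,1,0],[0,2α,1,1,0,0],[α,1,0,0,0,0]] with α ∈ ℝ. Then B has rank 4 if and only if α = 0, and when α = 0, B has exactly two positive and two negative eigenvalues. -/

import Mathlib

open Matrix Finset

noncomputable def Bmat19 (α : ℝ) : Matrix (Fin 6) (Fin 6) ℝ :=
  !![0, 0, 0, 0, 0, α;
     0, 0, 0, 0, 2 * α, 1;
     0, 0, 2 * α, 0, 1, 0;
     0, 0, 0, α, 1, 0;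
     0, 2 * α, 1, 1, 0, 0;
     α, 1, 0, 0, 0, 0]

@[simp]
lemma cons_val_five' {α : Type*} {m : ℕ} (x : α) (u : Fin (m+5) → α) :
    Matrix.vecCons x u 5 = Matrix.vecHead (Matrix.vecTail (Matrix.vecTail (Matrix.vecTail (Matrix.vecTail u)))) :=
  rfl

def V4 : Fin 4 → (Fin 6 → ℝ) :=
  ![![0,1,0,0,0,0], ![0,0,1,1,0,0], ![0,0,0,0,1,0], ![0,0,0,0,0,1]]

lemma V4_indep : LinearIndependent ℝ V4 := by
  rw [Fintype.linearIndependent_iff]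
  intro g hg i
  have h1 := congrFun hg 1
  have h2 := congrFun hg 2
  have h4 := congrFun hg 4
  have h5 := congrFun hg 5
  simp [V4, Fin.sum_univ_four, Matrix.vecHead, Matrix.vecTail] at h1 h2 h4 h5
  fin_cases i <;> assumption

lemma rank19_zero : (Bmat19 0).rank = 4 := by
  rw [Matrix.rank_eq_finrank_span_cols]
  change Module.finrank ℝ (Submodule.span ℝ (Set.range (Bmat19 0)ᵀ)) = 4
  have hspan : Submodule.span ℝ (Set.range (Bmat19 0)ᵀ) = Submodule.span ℝ (Set.range V4) := by
    apply le_antisymm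
    · rw [Submodule.span_le]
      rintro x ⟨j, rfl⟩
      fin_cases j
      · show (Bmat19 0)ᵀ 0 ∈ _
        have h0 : (Bmat19 0)ᵀ 0 = 0 := by
          funext k; fin_cases k <;> norm_num [Bmat19, Matrix.vecHead, Matrix.vecTail]
        rw [h0]; exact Submodule.zero_mem _
      · exact Submodule.subset_span ⟨3, by funext k; fin_cases k <;> norm_num [Bmat19, V4, Matrix.vecHead, Matrix.vecTail] <;> rfl⟩
      · exact Submodule.subset_span ⟨2, by funext k; fin_cases k <;> norm_num [Bmat19, V4, Matrix.vecHead, Matrix.vecTail] <;> rfl⟩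
      · exact Submodule.subset_span ⟨2, by funext k; fin_cases k <;> norm_num [Bmat19, V4, Matrix.vecHead, Matrix.vecTail] <;> rfl⟩
      · exact Submodule.subset_span ⟨1, by funext k; fin_cases k <;> norm_num [Bmat19, V4, Matrix.vecHead, Matrix.vecTail]⟩
      · exact Submodule.subset_span ⟨0, by funext k; fin_cases k <;> norm_num [Bmat19, V4, Matrix.vecHead, Matrix.vecTail]⟩
    · rw [Submodule.span_le]
      rintro x ⟨j, rfl⟩
      fin_cases j
      · exact Submodule.subset_span ⟨5, by funext k; fin_cases k <;> norm_num [Bmat19, V4, Matrix.vecHead, Matrix.vecTail] <;> rfl⟩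
      · exact Submodule.subset_span ⟨4, by funext k; fin_cases k <;> norm_num [Bmat19, V4, Matrix.vecHead, Matrix.vecTail] <;> rfl⟩
      · exact Submodule.subset_span ⟨2, by funext k; fin_cases k <;> norm_num [Bmat19, V4, Matrix.vecHead, Matrix.vecTail] <;> rfl⟩
      · exact Submodule.subset_span ⟨1, by funext k; fin_cases k <;> norm_num [Bmat19, V4, Matrix.vecHead, Matrix.vecTail]⟩
  rw [hspan, finrank_span_eq_card V4_indep]
  rfl

def W5 (α : ℝ) : Fin 5 → (Fin 6 → ℝ) :=
  ![![0,0,0,0,0,α], ![0,0,0,0,2*α,1], ![0,0,2*α,0,1,0], ![0,0,0,α,1,0], ![α,1,0,0,0,0]]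

lemma W5_indep {α : ℝ} (hα : α ≠ 0) : LinearIndependent ℝ (W5 α) := by
  rw [Fintype.linearIndependent_iff]
  intro g hg i
  have h0 := congrFun hg 0
  have h2 := congrFun hg 2
  have h3 := congrFun hg 3
  have h4 := congrFun hg 4
  have h5 := congrFun hg 5
  simp [W5, Fin.sum_univ_five, Matrix.vecHead, Matrix.vecTail] at h0 h2 h3 h4 h5
  have g4 : g 4 = 0 := h0.resolve_right hα
  have g2 : g 2 = 0 := h2.resolve_right hα
  have g3 : g 3 = 0 := h3.resolve_right hα
  have g1 : g 1 = 0 := by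
    rw [g2, g3] at h4
    have : g 1 * (2 * α) = 0 := by linarith
    rcases mul_eq_zero.1 this with h | h
    · exact h
    · exact absurd (by linarith : α = 0) hα
  have g0 : g 0 = 0 := by
    rw [g1] at h5
    have : g 0 * α = 0 := by linarith
    rcases mul_eq_zero.1 this with h | h
    · exact h
    · exact absurd h hα
  fin_cases i <;> assumption

lemma rank19_ne {α : ℝ} (hα : α ≠ 0) : (Bmat19 α).rank ≠ 4 := by
  have h5le : 5 ≤ (Bmat19 α).rank := by
    rw [Matrix.rank_eq_finrank_span_cols]
    have hsub : Set.range (W5 α) ⊆ Set.range (Bmat19 α)ᵀ := by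
      rintro x ⟨j, rfl⟩
      fin_cases j
      · exact ⟨0, by funext k; fin_cases k <;> norm_num [Bmat19, W5, Matrix.vecHead, Matrix.vecTail]⟩
      · exact ⟨1, by funext k; fin_cases k <;> norm_num [Bmat19, W5, Matrix.vecHead, Matrix.vecTail]⟩
      · exact ⟨2, by funext k; fin_cases k <;> norm_num [Bmat19, W5, Matrix.vecHead, Matrix.vecTail] <;> rfl⟩
      · exact ⟨3, by funext k; fin_cases k <;> norm_num [Bmat19, W5, Matrix.vecHead, Matrix.vecTail] <;> rfl⟩
      · exact ⟨5, by funext k; fin_cases k <;> norm_num [Bmat19, W5, Matrix.vecHead, Matrix.vecTail] <;> rfl⟩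
    have hmono : Submodule.span ℝ (Set.range (W5 α)) ≤ Submodule.span ℝ (Set.range (Bmat19 α)ᵀ) :=
      Submodule.span_mono hsub
    have := Submodule.finrank_mono hmono
    rw [finrank_span_eq_card (W5_indep hα)] at this
    exact this
  omega

lemma sum_eig19 (hB : (Bmat19 0).IsHermitian) : ∑ i, hB.eigenvalues i = 0 := by
  have hspec := hB.spectral_theorem
  have htr : (Bmat19 0).trace = ∑ i, hB.eigenvalues i := by
    conv_lhs => rw [hspec]
    rw [Unitary.conjStarAlgAut_apply]
    rw [Matrix.trace_mul_comm]
    rw [← Matrix.mul_assoc]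
    have hu : (star (hB.eigenvectorUnitary : Matrix (Fin 6) (Fin 6) ℝ)) *
        (hB.eigenvectorUnitary : Matrix (Fin 6) (Fin 6) ℝ) = 1 := by
      simpa using (Matrix.mem_unitaryGroup_iff'.mp hB.eigenvectorUnitary.2)
    rw [hu, Matrix.one_mul, Matrix.trace_diagonal]
    simp
  have h0 : (Bmat19 0).trace = 0 := by
    simp [Bmat19, Matrix.trace, Fin.sum_univ_six, Matrix.diag, Matrix.vecHead, Matrix.vecTail]
  rw [← htr, h0]

lemma eig19_vals (hB : (Bmat19 0).IsHermitian) (i : Fin 6) :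
    hB.eigenvalues i = 0 ∨ hB.eigenvalues i = 1 ∨ hB.eigenvalues i = -1 ∨
      hB.eigenvalues i = Real.sqrt 2 ∨ hB.eigenvalues i = -Real.sqrt 2 := by
  by_contra hcon
  push_neg at hcon
  obtain ⟨hn0, hn1, hnm1, hns, hnms⟩ := hcon
  set l := hB.eigenvalues i with hl
  set v : Fin 6 → ℝ := ⇑(hB.eigenvectorBasis i) with hv
  have h := hB.mulVec_eigenvectorBasis i
  have hs2 : Real.sqrt 2 * Real.sqrt 2 = 2 := Real.mul_self_sqrt (by norm_num)
  have hne1 : l * l - 1 ≠ 0 := by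
    intro hh
    have : (l - 1) * (l + 1) = 0 := by linear_combination hh
    rcases mul_eq_zero.1 this with h' | h'
    · exact hn1 (by linarith)
    · exact hnm1 (by linarith)
  have hne2 : l * l - 2 ≠ 0 := by
    intro hh
    have : (l - Real.sqrt 2) * (l + Real.sqrt 2) = 0 := by linear_combination hh - hs2
    rcases mul_eq_zero.1 this with h' | h'
    · exact hns (by linarith)
    · exact hnms (by linarith)
  have e0 := congrFun h 0
  have e1 := congrFun h 1
  have e2 := congrFun h 2
  have e3 := congrFun h 3
  have e4 := congrFun h 4
  have e5 := congrFun h 5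
  simp only [← hv, ← hl] at e0 e1 e2 e3 e4 e5
  simp [Bmat19, Matrix.mulVec, dotProduct, Fin.sum_univ_six, Matrix.vecHead,
    Matrix.vecTail] at e0 e1 e2 e3 e4 e5
  have hv1 : v 1 = 0 := by
    have hq : (l * l - 1) * v 1 = 0 := by linear_combination (-1 : ℝ) * e5 - l * e1
    exact (mul_eq_zero.1 hq).resolve_left hne1
  have hv5 : v 5 = 0 := by rw [hv1] at e1; simpa using e1
  have hv4 : v 4 = 0 := by
    have hq : (l * l - 2) * v 4 = 0 := by linear_combination (-l) * e4 - e2 - e3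
    exact (mul_eq_zero.1 hq).resolve_left hne2
  have hv2 : v 2 = 0 := by
    rw [hv4] at e2
    exact ((mul_eq_zero.1 e2.symm).resolve_left hn0)
  have hv3 : v 3 = 0 := by
    rw [hv4] at e3
    exact ((mul_eq_zero.1 e3.symm).resolve_left hn0)
  have hv0 : v 0 = 0 := e0.resolve_left hn0
  have hnorm := hB.eigenvectorBasis.orthonormal.1 i
  rw [EuclideanSpace.norm_eq] at hnorm
  rw [Fin.sum_univ_six] at hnorm
  have hb : ∀ j : Fin 6, hB.eigenvectorBasis i j = v j := fun j => rfl
  rw [hb 0, hb 1, hb 2, hb 3, hb 4, hb 5, hv0, hv1, hv2, hv3, hv4, hv5] at hnorm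
  norm_num at hnorm

lemma counts19 (hB : (Bmat19 0).IsHermitian) :
    Fintype.card {i // 0 < hB.eigenvalues i} = 2 ∧
      Fintype.card {i // hB.eigenvalues i < 0} = 2 := by
  classical
  have h5 := eig19_vals hB
  have hsum := sum_eig19 hB
  have hs2pos : (0:ℝ) < Real.sqrt 2 := Real.sqrt_pos.2 (by norm_num)
  have hs2 : Real.sqrt 2 * Real.sqrt 2 = 2 := Real.mul_self_sqrt (by norm_num)
  have h21 : (1:ℝ) < Real.sqrt 2 := by nlinarith
  have hmneg : -Real.sqrt 2 < 0 := neg_lt_zero.mpr hs2pos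
  have h13 : (1:ℝ) ≠ Real.sqrt 2 := by linarith
  have h14 : (1:ℝ) ≠ -Real.sqrt 2 := by linarith
  have h23 : (-1:ℝ) ≠ Real.sqrt 2 := by linarith
  have h24 : (-1:ℝ) ≠ -Real.sqrt 2 := by linarith
  have h34 : Real.sqrt 2 ≠ -Real.sqrt 2 := by linarith
  -- the four value classes
  have hd : ∀ (a b : ℝ), a ≠ b →
      Disjoint (Finset.univ.filter (fun i => hB.eigenvalues i = a))
        (Finset.univ.filter (fun i => hB.eigenvalues i = b)) := by
    intro a b hab
    rw [Finset.disjoint_left]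
    intro i hi hj
    rw [Finset.mem_filter] at hi hj
    exact hab (hi.2 ▸ hj.2 ▸ rfl)
  have hne_eq : Finset.univ.filter (fun i => hB.eigenvalues i ≠ 0) =
      ((Finset.univ.filter (fun i => hB.eigenvalues i = 1) ∪
        Finset.univ.filter (fun i => hB.eigenvalues i = -1)) ∪
        Finset.univ.filter (fun i => hB.eigenvalues i = Real.sqrt 2)) ∪
        Finset.univ.filter (fun i => hB.eigenvalues i = -Real.sqrt 2) := by
    rw [← Finset.filter_or, ← Finset.filter_or, ← Finset.filter_or]
    apply Finset.filter_congr
    intro i _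
    rcases h5 i with h|h|h|h|h <;> rw [h] <;>
      norm_num [hs2pos.ne', hmneg.ne, h13, h14, h23, h24, h34, h13.symm, h14.symm, h23.symm,
        h24.symm, h34.symm] <;> try (intro hh; linarith)
  have hpos_eq : Finset.univ.filter (fun i => 0 < hB.eigenvalues i) =
      Finset.univ.filter (fun i => hB.eigenvalues i = 1) ∪
        Finset.univ.filter (fun i => hB.eigenvalues i = Real.sqrt 2) := by
    rw [← Finset.filter_or]
    apply Finset.filter_congr
    intro i _
    rcases h5 i with h|h|h|h|h <;> rw [h] <;>
      norm_num [hs2pos, hmneg.not_gt, h13.symm, h23.symm, h34.symm, h24.symm, h14.symm] <;>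
        try (intro hh; linarith)
  have hneg_eq : Finset.univ.filter (fun i => hB.eigenvalues i < 0) =
      Finset.univ.filter (fun i => hB.eigenvalues i = -1) ∪
        Finset.univ.filter (fun i => hB.eigenvalues i = -Real.sqrt 2) := by
    rw [← Finset.filter_or]
    apply Finset.filter_congr
    intro i _
    rcases h5 i with h|h|h|h|h <;> rw [h] <;>
      norm_num [hs2pos.not_gt, hmneg, h13.symm, h23.symm, h34.symm, h24.symm, h14.symm, h34] <;>
        try (intro hh; linarith)
  -- cardinalities
  have hrank : Fintype.card {i // hB.eigenvalues i ≠ 0} = 4 := by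
    rw [← hB.rank_eq_card_non_zero_eigs, rank19_zero]
  rw [Fintype.card_subtype] at hrank
  rw [hne_eq] at hrank
  have hd1 : Disjoint (Finset.univ.filter (fun i => hB.eigenvalues i = 1))
      (Finset.univ.filter (fun i => hB.eigenvalues i = -1)) := hd _ _ (by norm_num)
  have hd2 : Disjoint ((Finset.univ.filter (fun i => hB.eigenvalues i = 1)) ∪
      (Finset.univ.filter (fun i => hB.eigenvalues i = -1)))
      (Finset.univ.filter (fun i => hB.eigenvalues i = Real.sqrt 2)) := by
    rw [Finset.disjoint_union_left]
    exact ⟨hd _ _ h13, hd _ _ h23⟩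
  have hd3 : Disjoint (((Finset.univ.filter (fun i => hB.eigenvalues i = 1)) ∪
      (Finset.univ.filter (fun i => hB.eigenvalues i = -1))) ∪
      (Finset.univ.filter (fun i => hB.eigenvalues i = Real.sqrt 2)))
      (Finset.univ.filter (fun i => hB.eigenvalues i = -Real.sqrt 2)) := by
    rw [Finset.disjoint_union_left, Finset.disjoint_union_left]
    exact ⟨⟨hd _ _ h14, hd _ _ h24⟩, hd _ _ h34⟩
  rw [Finset.card_union_of_disjoint hd3, Finset.card_union_of_disjoint hd2,
    Finset.card_union_of_disjoint hd1] at hrank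
  -- sum decomposition
  have hsc : ∀ c : ℝ, ∑ i ∈ Finset.univ.filter (fun i => hB.eigenvalues i = c), hB.eigenvalues i
      = (Finset.univ.filter (fun i => hB.eigenvalues i = c)).card * c := by
    intro c
    rw [Finset.sum_congr rfl (fun i hi => (Finset.mem_filter.1 hi).2), Finset.sum_const,
      nsmul_eq_mul]
  have hsplit := Finset.sum_filter_add_sum_filter_not Finset.univ
    (fun i => hB.eigenvalues i = 0) hB.eigenvalues
  rw [hsum] at hsplit
  have hz : ∑ i ∈ Finset.univ.filter (fun i => hB.eigenvalues i = 0), hB.eigenvalues i = 0 :=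
    Finset.sum_eq_zero (fun i hi => (Finset.mem_filter.1 hi).2)
  rw [hz, zero_add] at hsplit
  have hne_eq' : Finset.univ.filter (fun i => ¬ hB.eigenvalues i = 0) =
      ((Finset.univ.filter (fun i => hB.eigenvalues i = 1) ∪
        Finset.univ.filter (fun i => hB.eigenvalues i = -1)) ∪
        Finset.univ.filter (fun i => hB.eigenvalues i = Real.sqrt 2)) ∪
        Finset.univ.filter (fun i => hB.eigenvalues i = -Real.sqrt 2) := hne_eq
  rw [hne_eq', Finset.sum_union hd3, Finset.sum_union hd2, Finset.sum_union hd1,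
    hsc 1, hsc (-1), hsc (Real.sqrt 2), hsc (-Real.sqrt 2)] at hsplit
  -- abbreviations
  set a := (Finset.univ.filter (fun i => hB.eigenvalues i = 1)).card with ha
  set b := (Finset.univ.filter (fun i => hB.eigenvalues i = -1)).card with hb
  set c := (Finset.univ.filter (fun i => hB.eigenvalues i = Real.sqrt 2)).card with hc
  set d := (Finset.univ.filter (fun i => hB.eigenvalues i = -Real.sqrt 2)).card with hdd
  -- irrationality: c = d, then a = b
  have hcd : c = d := by
    by_contra hne
    have hy : ((c:ℝ) - d) ≠ 0 := by
      intro hh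
      apply hne
      have : (c:ℝ) = d := by linarith
      exact_mod_cast this
    have : Real.sqrt 2 = (((b:ℚ) - a) / ((c:ℚ) - d) : ℚ) := by
      push_cast
      rw [eq_div_iff (by exact_mod_cast hy)]
      linarith [hsplit]
    exact irrational_sqrt_two ⟨_, this.symm⟩
  have hab : a = b := by
    have : (a:ℝ) = b := by
      rw [hcd] at hsplit
      linarith [hsplit]
    exact_mod_cast this
  have hac : a + c = 2 := by omega
  constructor
  · rw [Fintype.card_subtype, hpos_eq, Finset.card_union_of_disjoint (hd _ _ h13)]
    exact hac
  · rw [Fintype.card_subtype, hneg_eq, Finset.card_union_of_disjoint (hd _ _ h24)]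
    omega

theorem stmt_19 (α : ℝ) (hB : (Bmat19 α).IsHermitian) :
    ((Bmat19 α).rank = 4 ↔ α = 0) ∧
      (α = 0 →
        Fintype.card {i // 0 < hB.eigenvalues i} = 2 ∧
        Fintype.card {i // hB.eigenvalues i < 0} = 2) := by
  constructor
  · constructor
    · intro hr
      by_contra hα
      exact rank19_ne hα hr
    · rintro rfl
      exact rank19_zero
  · intro hα
    subst hα
    exact counts19 hB
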